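/- Let q ∈ K be an n-th root of unity of order d with d dividing n and d ≥ 2, and μ ∈ K. The algebra A(n, d, μ, q) generated by g, x with relations g^n = 1, x^d = μ(1 − g^d), xg = qgx has K-dimension n·d, with basis {g^i x^j : 0 ≤ i ≤ n−1, 0 ≤ j ≤ d−1}. -/

import Mathlib

set_option linter.unusedSectionVars false

open Fin.NatCast

section OpAux
set_option linter.unusedSectionVars false

variable {K : Type*} [Field K] {n d : ℕ} (mu q : K) [NeZero n] [NeZero d]

/-- The standard basis of the model space. -/
noncomputable def Vb (K : Type*) [Field K] (n d : ℕ) :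
    Module.Basis (Fin n × Fin d) K (Fin n × Fin d → K) := Pi.basisFun K _

/-- The operator modelling left multiplication by `g`. -/
noncomputable def Gop (K : Type*) [Field K] (n d : ℕ) [NeZero n] :
    (Fin n × Fin d → K) →ₗ[K] (Fin n × Fin d → K) :=
  (Vb K n d).constr K fun p => Vb K n d (p.1 + 1, p.2)

/-- The operator modelling left multiplication by `x`. -/
noncomputable def Xop (K : Type*) [Field K] (n d : ℕ) (mu q : K) [NeZero n] [NeZero d] :
    (Fin n × Fin d → K) →ₗ[K] (Fin n × Fin d → K) :=
  (Vb K n d).constr K fun p =>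
    if (p.2 : ℕ) + 1 < d then q ^ (p.1 : ℕ) • Vb K n d (p.1, p.2 + 1)
    else (mu * q ^ (p.1 : ℕ)) • (Vb K n d (p.1, 0) - Vb K n d (p.1 + (d : Fin n), 0))

lemma Gop_apply (p : Fin n × Fin d) :
    Gop K n d (Vb K n d p) = Vb K n d (p.1 + 1, p.2) :=
  Module.Basis.constr_basis _ _ _ _

lemma Xop_apply (p : Fin n × Fin d) :
    Xop K n d mu q (Vb K n d p) =
      if (p.2 : ℕ) + 1 < d then q ^ (p.1 : ℕ) • Vb K n d (p.1, p.2 + 1)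
      else (mu * q ^ (p.1 : ℕ)) • (Vb K n d (p.1, 0) - Vb K n d (p.1 + (d : Fin n), 0)) :=
  Module.Basis.constr_basis _ _ _ _

lemma Gop_pow (k : ℕ) (i : Fin n) (j : Fin d) :
    (Gop K n d ^ k) (Vb K n d (i, j)) = Vb K n d (i + (k : Fin n), j) := by
  induction k with
  | zero => simp
  | succ k ih =>
    rw [pow_succ', Module.End.mul_apply, ih, Gop_apply]
    congr 2
    simp only [Nat.cast_add, Nat.cast_one]
    simp only [add_assoc]

lemma Xop_pow (k j : ℕ) (i : Fin n) (h : j + k < d) :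
    (Xop K n d mu q ^ k) (Vb K n d (i, ⟨j, lt_of_le_of_lt (Nat.le_add_right j k) h⟩)) =
      q ^ ((i : ℕ) * k) • Vb K n d (i, ⟨j + k, h⟩) := by
  induction k generalizing j with
  | zero => simp
  | succ k ih =>
    rw [pow_succ, Module.End.mul_apply, Xop_apply]
    have hc : j + 1 < d := by omega
    rw [if_pos (by simpa using hc)]
    have he : (⟨j, lt_of_le_of_lt (Nat.le_add_right j (k+1)) h⟩ : Fin d) + 1
        = ⟨j + 1, by omega⟩ := by
      apply Fin.ext
      rw [Fin.add_def]
      simp only [Fin.val_mk, Fin.val_one']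
      rw [Nat.one_mod_eq_one.mpr (by omega), Nat.mod_eq_of_lt hc]
    rw [map_smul, he, ih (j + 1) (by omega), smul_smul, ← pow_add]
    have h1 : (i:ℕ) + (i:ℕ)*k = (i:ℕ)*(k+1) := by ring
    have h2 : (⟨j + 1 + k, by omega⟩ : Fin d) = ⟨j + (k+1), h⟩ := by
      apply Fin.ext
      show j + 1 + k = j + (k + 1)
      omega
    rw [h1, h2]

end OpAux

section Rel

variable {K : Type*} [Field K] {n d : ℕ} (mu q : K) [NeZero n] [NeZero d]

lemma q_pow_mod {q : K} (hq : q ^ n = 1) (a : ℕ) : q ^ (a % n) = q ^ a := by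
  conv_rhs => rw [← Nat.div_add_mod a n, pow_add, pow_mul, hq, one_pow, one_mul]

lemma q_val_add {q : K} (hq : q ^ n = 1) (i : Fin n) (b : ℕ) :
    q ^ (((i + (b : Fin n)) : Fin n) : ℕ) = q ^ ((i : ℕ) + b) := by
  rw [Fin.add_def]
  simp only [Fin.val_mk, Fin.val_natCast]
  rw [q_pow_mod hq, pow_add, q_pow_mod hq, ← pow_add]

lemma q_val_succ {q : K} (hq : q ^ n = 1) (i : Fin n) :
    q ^ (((i + 1) : Fin n) : ℕ) = q * q ^ (i : ℕ) := by
  have h := q_val_add hq i 1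
  rw [Nat.cast_one] at h
  rw [h, pow_succ, mul_comm]

lemma Gop_apply' (i : Fin n) (j : Fin d) :
    Gop K n d (Vb K n d (i, j)) = Vb K n d (i + 1, j) :=
  Gop_apply (i, j)

lemma Xop_apply' (i : Fin n) (j : Fin d) :
    Xop K n d mu q (Vb K n d (i, j)) =
      if (j : ℕ) + 1 < d then q ^ (i : ℕ) • Vb K n d (i, j + 1)
      else (mu * q ^ (i : ℕ)) • (Vb K n d (i, 0) - Vb K n d (i + (d : Fin n), 0)) :=
  Xop_apply mu q (i, j)

lemma Xop_pow' (k a b : ℕ) (i : Fin n) (ha : a < d) (hb : b < d) (hab : a + k = b) :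
    (Xop K n d mu q ^ k) (Vb K n d (i, ⟨a, ha⟩)) =
      q ^ ((i : ℕ) * k) • Vb K n d (i, ⟨b, hb⟩) := by
  subst hab
  exact Xop_pow mu q k a i hb

lemma Xop_pow_zero (k : ℕ) (i : Fin n) (hk : k < d) :
    (Xop K n d mu q ^ k) (Vb K n d (i, 0)) = q ^ ((i : ℕ) * k) • Vb K n d (i, ⟨k, hk⟩) :=
  Xop_pow' mu q k 0 k i (Nat.pos_of_ne_zero (NeZero.ne d)) hk (Nat.zero_add k)

lemma Gop_rel : (Gop K n d) ^ n = 1 := by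
  refine (Vb K n d).ext fun p => ?_
  obtain ⟨i, j⟩ := p
  rw [Gop_pow, Module.End.one_apply, Fin.natCast_self, add_zero]

lemma comm_rel (hq : q ^ n = 1) :
    Xop K n d mu q * Gop K n d = q • (Gop K n d * Xop K n d mu q) := by
  refine (Vb K n d).ext fun p => ?_
  obtain ⟨i, j⟩ := p
  simp only [Module.End.mul_apply, LinearMap.smul_apply, Gop_apply', Xop_apply']
  by_cases hc : (j : ℕ) + 1 < d
  · rw [if_pos hc, if_pos hc, map_smul, Gop_apply', smul_smul, q_val_succ hq]
  · rw [if_neg hc, if_neg hc, map_smul, map_sub, Gop_apply', Gop_apply', smul_smul,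
      q_val_succ hq, add_right_comm]
    ring_nf

lemma Xd_rel (hq : q ^ n = 1) (hqd : q ^ d = 1) :
    Xop K n d mu q ^ d = mu • (1 - (Gop K n d) ^ d) := by
  refine (Vb K n d).ext fun p => ?_
  obtain ⟨i, j⟩ := p
  have hj := j.isLt
  have hsplit : Xop K n d mu q ^ d
      = Xop K n d mu q ^ (j : ℕ) * Xop K n d mu q * Xop K n d mu q ^ (d - 1 - (j : ℕ)) := by
    rw [← pow_succ, ← pow_add]
    congr 1
    omega
  have hGd : q ^ (((i + (d : Fin n)) : Fin n) : ℕ) = q ^ (i : ℕ) := by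
    rw [q_val_add hq, pow_add, hqd, mul_one]
  rw [hsplit, Module.End.mul_apply, Module.End.mul_apply,
    Xop_pow' mu q (d - 1 - (j : ℕ)) (j : ℕ) (d - 1) i hj (by omega) (by omega),
    map_smul, map_smul, Xop_apply' mu q i ⟨d - 1, by omega⟩]
  rw [if_neg (by simp only [Fin.val_mk]; omega)]
  rw [map_smul, map_sub,
    Xop_pow_zero mu q (j : ℕ) i hj,
    Xop_pow_zero mu q (j : ℕ) (i + (d : Fin n)) hj]
  rw [LinearMap.smul_apply, LinearMap.sub_apply, Module.End.one_apply, Gop_pow]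
  rw [pow_mul q (((i + (d : Fin n)) : Fin n) : ℕ), hGd, ← pow_mul]
  rw [smul_sub, smul_sub, smul_smul, smul_smul, smul_smul, smul_smul]
  have key : q ^ ((i : ℕ) * (d - 1 - (j : ℕ))) * (mu * q ^ ((i : ℕ))) * q ^ ((i : ℕ) * (j : ℕ))
      = mu := by
    calc q ^ ((i : ℕ) * (d - 1 - (j : ℕ))) * (mu * q ^ ((i : ℕ))) * q ^ ((i : ℕ) * (j : ℕ))
        = mu * (q ^ ((i : ℕ) * (d - 1 - (j : ℕ))) * q ^ ((i : ℕ)) * q ^ ((i : ℕ) * (j : ℕ))) := by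
          ring
      _ = mu * q ^ ((i : ℕ) * (d - 1 - (j : ℕ)) + (i : ℕ) + (i : ℕ) * (j : ℕ)) := by
          rw [← pow_add, ← pow_add]
      _ = mu * q ^ ((i : ℕ) * d) := by
          congr 1
          have hm : (d - 1 - (j : ℕ)) + 1 + (j : ℕ) = d := by omega
          conv_rhs => rw [← hm]
          ring
      _ = mu := by rw [mul_comm (i : ℕ) d, pow_mul, hqd, one_pow, mul_one]
  rw [key, ← smul_sub]

end Rel

open FreeAlgebra in
/-- Relations of the algebra `A(n, d, μ, q)`: `g^n = 1`, `x^d = μ(1 - g^d)`, `xg = q·gx`,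
where `g` and `x` are the generators indexed by `false` and `true`. -/
inductive ARel (K : Type*) [Field K] (n d : ℕ) (mu q : K) :
    FreeAlgebra K Bool → FreeAlgebra K Bool → Prop
  | g : ARel K n d mu q (ι K false ^ n) 1
  | x : ARel K n d mu q (ι K true ^ d) (mu • (1 - ι K false ^ d))
  | comm : ARel K n d mu q (ι K true * ι K false) (q • (ι K false * ι K true))

/-- The algebra `A(n, d, μ, q)`. -/
abbrev AAlg (K : Type*) [Field K] (n d : ℕ) (mu q : K) := RingQuot (ARel K n d mu q)

/-- The generator `g` of `A(n, d, μ, q)`. -/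
noncomputable def Agen (K : Type*) [Field K] (n d : ℕ) (mu q : K) : AAlg K n d mu q :=
  RingQuot.mkAlgHom K (ARel K n d mu q) (FreeAlgebra.ι K false)

/-- The generator `x` of `A(n, d, μ, q)`. -/
noncomputable def Axgen (K : Type*) [Field K] (n d : ℕ) (mu q : K) : AAlg K n d mu q :=
  RingQuot.mkAlgHom K (ARel K n d mu q) (FreeAlgebra.ι K true)


section Psi

variable {K : Type*} [Field K] (n d : ℕ) (mu q : K) [NeZero n] [NeZero d]

/-- The lift of the generators to operators on the model space. -/
noncomputable def liftF : FreeAlgebra K Bool →ₐ[K] Module.End K (Fin n × Fin d → K) :=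
  FreeAlgebra.lift K (fun y => if y then Xop K n d mu q else Gop K n d)

lemma liftF_rel (hq : q ^ n = 1) (hqd : q ^ d = 1) :
    ∀ ⦃a b : FreeAlgebra K Bool⦄, ARel K n d mu q a b →
      liftF n d mu q a = liftF n d mu q b := by
  intro a b h
  cases h with
  | g =>
    rw [map_pow, map_one]
    unfold liftF
    rw [FreeAlgebra.lift_ι_apply, if_neg (by simp)]
    exact Gop_rel
  | x =>
    rw [map_pow, map_smul, map_sub, map_one, map_pow]
    unfold liftF
    rw [FreeAlgebra.lift_ι_apply, FreeAlgebra.lift_ι_apply, if_pos rfl, if_neg (by simp)]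
    exact Xd_rel mu q hq hqd
  | comm =>
    rw [map_mul, map_smul, map_mul]
    unfold liftF
    rw [FreeAlgebra.lift_ι_apply, FreeAlgebra.lift_ι_apply, if_pos rfl, if_neg (by simp)]
    exact comm_rel mu q hq

/-- The representation of `A(n,d,μ,q)` on the model space. -/
noncomputable def psi (hq : q ^ n = 1) (hqd : q ^ d = 1) :
    AAlg K n d mu q →ₐ[K] Module.End K (Fin n × Fin d → K) :=
  RingQuot.liftAlgHom K ⟨liftF n d mu q, liftF_rel n d mu q hq hqd⟩

lemma psi_g (hq : q ^ n = 1) (hqd : q ^ d = 1) :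
    psi n d mu q hq hqd (Agen K n d mu q) = Gop K n d := by
  unfold psi Agen
  rw [RingQuot.liftAlgHom_mkAlgHom_apply]
  unfold liftF
  rw [FreeAlgebra.lift_ι_apply, if_neg (by simp)]

lemma psi_x (hq : q ^ n = 1) (hqd : q ^ d = 1) :
    psi n d mu q hq hqd (Axgen K n d mu q) = Xop K n d mu q := by
  unfold psi Axgen
  rw [RingQuot.liftAlgHom_mkAlgHom_apply]
  unfold liftF
  rw [FreeAlgebra.lift_ι_apply, if_pos rfl]

/-- Evaluation of the representation at the basis vector `e₀₀`. -/
noncomputable def evmap (hq : q ^ n = 1) (hqd : q ^ d = 1) :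
    AAlg K n d mu q →ₗ[K] (Fin n × Fin d → K) where
  toFun a := psi n d mu q hq hqd a (Vb K n d (0, 0))
  map_add' a b := by simp
  map_smul' r a := by simp

lemma evmap_apply (hq : q ^ n = 1) (hqd : q ^ d = 1) (i : Fin n) (j : Fin d) :
    evmap n d mu q hq hqd (Agen K n d mu q ^ (i : ℕ) * Axgen K n d mu q ^ (j : ℕ))
      = Vb K n d (i, j) := by
  show (psi n d mu q hq hqd (Agen K n d mu q ^ (i : ℕ) * Axgen K n d mu q ^ (j : ℕ)))
    (Vb K n d (0, 0)) = _
  rw [map_mul, map_pow, map_pow, psi_g, psi_x, Module.End.mul_apply,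
    Xop_pow_zero mu q (j : ℕ) 0 j.isLt, map_smul, Gop_pow, Fin.val_zero, zero_mul, pow_zero,
    one_smul, zero_add, Fin.cast_val_eq_self]

end Psi

/-- for `q` an `n`-th root of unity of order `d`, `d ∣ n`, `d ≥ 2` and
`μ ∈ K`, the algebra `A(n, d, μ, q)` has `K`-dimension `n·d`, with basis
`{g^i x^j : 0 ≤ i ≤ n-1, 0 ≤ j ≤ d-1}`. -/
theorem stmt16 {K : Type*} [Field K] [CharZero K] (n d : ℕ) (mu q : K)
    (hn : 0 < n) (hd : 2 ≤ d) (hdvd : d ∣ n) (hqn : q ^ n = 1)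
    (h1 : q ^ d = 1) (h2 : ∀ k : ℕ, 0 < k → k < d → q ^ k ≠ 1) :
    Module.finrank K (AAlg K n d mu q) = n * d ∧
    ∃ B : Module.Basis (Fin n × Fin d) K (AAlg K n d mu q),
      ∀ p : Fin n × Fin d,
        B p = Agen K n d mu q ^ (p.1 : ℕ) * Axgen K n d mu q ^ (p.2 : ℕ) := by
  haveI : NeZero n := ⟨hn.ne'⟩
  haveI : NeZero d := ⟨by omega⟩
  set g := Agen K n d mu q with hgdef
  set x := Axgen K n d mu q with hxdef
  have hg : g ^ n = 1 := by
    have h := RingQuot.mkAlgHom_rel K (ARel.g (K := K) (n := n) (d := d) (mu := mu) (q := q))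
    rw [map_pow, map_one] at h
    exact h
  have hx : x ^ d = mu • (1 - g ^ d) := by
    have h := RingQuot.mkAlgHom_rel K (ARel.x (K := K) (n := n) (d := d) (mu := mu) (q := q))
    rw [map_pow, map_smul, map_sub, map_one, map_pow] at h
    exact h
  have hcm : x * g = q • (g * x) := by
    have h := RingQuot.mkAlgHom_rel K (ARel.comm (K := K) (n := n) (d := d) (mu := mu) (q := q))
    rw [map_mul, map_smul, map_mul] at h
    exact h
  have hgmod : ∀ i : ℕ, g ^ i = g ^ (i % n) := by
    intro i
    conv_lhs => rw [← Nat.div_add_mod i n, pow_add, pow_mul, hg, one_pow, one_mul]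
  have hxg : ∀ i : ℕ, x * g ^ i = q ^ i • (g ^ i * x) := by
    intro i
    induction i with
    | zero => simp
    | succ i ih =>
      calc x * g ^ (i + 1) = x * g * g ^ i := by rw [pow_succ', mul_assoc]
        _ = (q • (g * x)) * g ^ i := by rw [hcm]
        _ = q • (g * (x * g ^ i)) := by rw [smul_mul_assoc, mul_assoc]
        _ = q • (g * (q ^ i • (g ^ i * x))) := by rw [ih]
        _ = q ^ (i + 1) • (g ^ (i + 1) * x) := by
          rw [mul_smul_comm, smul_smul, ← pow_succ' q i, pow_succ' g i, mul_assoc]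
  set v : Fin n × Fin d → AAlg K n d mu q := fun p => g ^ ((p.1 : ℕ)) * x ^ ((p.2 : ℕ)) with hv
  set S := Submodule.span K (Set.range v) with hS
  have hmono : ∀ i j : ℕ, j < d → g ^ i * x ^ j ∈ S := by
    intro i j hj
    rw [hgmod i]
    exact Submodule.subset_span ⟨(⟨i % n, Nat.mod_lt i hn⟩, ⟨j, hj⟩), rfl⟩
  have hgS : ∀ s ∈ S, g * s ∈ S := by
    intro s hs
    induction hs using Submodule.span_induction with
    | mem t ht =>
      obtain ⟨⟨pi, pj⟩, rfl⟩ := ht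
      show g * (g ^ ((pi : ℕ)) * x ^ ((pj : ℕ))) ∈ S
      rw [← mul_assoc, ← pow_succ']
      exact hmono _ _ pj.isLt
    | zero => rw [mul_zero]; exact S.zero_mem
    | add a b _ _ ha hb => rw [mul_add]; exact S.add_mem ha hb
    | smul r a _ ha => rw [mul_smul_comm]; exact S.smul_mem r ha
  have hxS : ∀ s ∈ S, x * s ∈ S := by
    intro s hs
    induction hs using Submodule.span_induction with
    | mem t ht =>
      obtain ⟨⟨pi, pj⟩, rfl⟩ := ht
      show x * (g ^ ((pi : ℕ)) * x ^ ((pj : ℕ))) ∈ S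
      rw [← mul_assoc, hxg, smul_mul_assoc, mul_assoc, ← pow_succ']
      by_cases hc : (pj : ℕ) + 1 < d
      · exact S.smul_mem _ (hmono _ _ hc)
      · have hpj : (pj : ℕ) + 1 = d := by omega
        rw [hpj, hx, mul_smul_comm, mul_sub, mul_one, ← pow_add]
        refine S.smul_mem _ (S.smul_mem _ (sub_mem ?_ ?_))
        · simpa using hmono (pi : ℕ) 0 (by omega)
        · simpa using hmono ((pi : ℕ) + d) 0 (by omega)
    | zero => rw [mul_zero]; exact S.zero_mem
    | add a b _ _ ha hb => rw [mul_add]; exact S.add_mem ha hb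
    | smul r a _ ha => rw [mul_smul_comm]; exact S.smul_mem r ha
  have hone : (1 : AAlg K n d mu q) ∈ S := by simpa using hmono 0 0 (by omega)
  have hsurj : ∀ a : AAlg K n d mu q, a ∈ S := by
    intro a
    obtain ⟨b, rfl⟩ := RingQuot.mkAlgHom_surjective K (ARel K n d mu q) a
    have key : ∀ c : FreeAlgebra K Bool, ∀ s ∈ S,
        RingQuot.mkAlgHom K (ARel K n d mu q) c * s ∈ S := by
      intro c
      induction c using FreeAlgebra.induction with
      | grade0 r => intro s hs; rw [AlgHom.commutes, ← Algebra.smul_def]; exact S.smul_mem r hs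
      | grade1 y =>
        cases y
        · intro s hs; exact hgS s hs
        · intro s hs; exact hxS s hs
      | mul a b ha hb => intro s hs; rw [map_mul, mul_assoc]; exact ha _ (hb s hs)
      | add a b ha hb => intro s hs; rw [map_add, add_mul]; exact S.add_mem (ha s hs) (hb s hs)
    simpa using key b 1 hone
  have hli : LinearIndependent K v := by
    apply LinearIndependent.of_comp (evmap n d mu q hqn h1)
    have he : (evmap n d mu q hqn h1) ∘ v = ⇑(Vb K n d) := by
      funext p
      obtain ⟨i, j⟩ := p
      exact evmap_apply n d mu q hqn h1 i j
    rw [he]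
    exact (Vb K n d).linearIndependent
  have hspan : ⊤ ≤ Submodule.span K (Set.range v) := fun a _ => hsurj a
  constructor
  · rw [Module.finrank_eq_card_basis (Module.Basis.mk hli hspan), Fintype.card_prod, Fintype.card_fin,
      Fintype.card_fin]
  · exact ⟨Module.Basis.mk hli hspan, fun p => Module.Basis.mk_apply hli hspan p⟩
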